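/- Suppose lim_{I₀→0}(1/I₀)[SI]'(0) = β(⟨k⟩²/2 − (3/2)⟨k⟩) − (γ+p)⟨k⟩ and lim_{I₀→0}(1/I₀)İ(0) = β⟨k⟩ − γ. Then lim_{I₀→0}(1/I₀)Ï(0) = β(β(⟨k⟩²/2 − (3/2)⟨k⟩) − (γ+p)⟨k⟩) − γ(β⟨k⟩ − γ), and this quantity is negative if and only if p > p₂* = β(⟨k⟩/2 − 3/2) − 2γ + γ²/(β⟨k⟩). -/

import Mathlib

/-- if (1/I₀)[SI]'(0) → A := β(⟨k⟩²/2 − (3/2)⟨k⟩) − (γ+p)⟨k⟩ and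
(1/I₀)İ(0) → β⟨k⟩ − γ, then (1/I₀)Ï(0) = β·(scaled [SI]') − γ·(scaled İ) tends to
βA − γ(β⟨k⟩ − γ), which is negative iff p > p₂* = β(⟨k⟩/2 − 3/2) − 2γ + γ²/(β⟨k⟩). -/
theorem stmt9 (β γ p k : ℝ) (hβ : 0 < β) (hγ : 0 < γ) (hp : 0 ≤ p) (hk : 0 < k)
    (fSI fI : ℝ → ℝ)
    (hSI : Filter.Tendsto fSI (nhdsWithin 0 (Set.Ioi 0))
      (nhds (β * (k ^ 2 / 2 - 3 / 2 * k) - (γ + p) * k)))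
    (hI : Filter.Tendsto fI (nhdsWithin 0 (Set.Ioi 0)) (nhds (β * k - γ))) :
    Filter.Tendsto (fun I₀ => β * fSI I₀ - γ * fI I₀) (nhdsWithin 0 (Set.Ioi 0))
      (nhds (β * (β * (k ^ 2 / 2 - 3 / 2 * k) - (γ + p) * k) - γ * (β * k - γ))) ∧
    (β * (β * (k ^ 2 / 2 - 3 / 2 * k) - (γ + p) * k) - γ * (β * k - γ) < 0 ↔
      β * (k / 2 - 3 / 2) - 2 * γ + γ ^ 2 / (β * k) < p) := by
  have hbk : 0 < β * k := mul_pos hβ hk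
  constructor
  · exact (hSI.const_mul β).sub (hI.const_mul γ)
  · rw [show β * (k / 2 - 3 / 2) - 2 * γ + γ ^ 2 / (β * k)
        = (β * (k / 2 - 3 / 2) * (β * k) - 2 * γ * (β * k) + γ ^ 2) / (β * k) by
          field_simp, div_lt_iff₀ hbk]
    constructor <;> intro h <;> nlinarith
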